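/- Let p be a probability density on ℝ^d (with respect to Lebesgue measure), let q be a probability density with q(u) > 0 wherever p(u) > 0, and suppose ∫ p(u)²/q(u) du ≤ C for some finite C > 0. Let g, ĝ : ℝ^d → ℝ be measurable, let σ > 0, and define the soft importance functions h⋆(u) = Φ(-g(u)/σ) and ĥ(u) = Φ(-ĝ(u)/σ) with normalizing constants Z⋆ = ∫ h⋆ p du and Ẑ = ∫ ĥ p du. Assume Z⋆ ≥ z for some z > 0 and Ẑ > 0. Then the intermediate target densities π⋆ = h⋆ p / Z⋆ and π̂ = ĥ p / Ẑ satisfy ∫ |π⋆(u) - π̂(u)| du ≤ (2 √C / (z σ √(2π))) · ( ∫ (g(u) - ĝ(u))² q(u) du )^{1/2}. -/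

import Mathlib

open MeasureTheory Set

/-- The standard normal cumulative distribution function
`Φ(x) = (1/√(2π)) ∫_{-∞}^{x} e^{-t²/2} dt`. -/
noncomputable def stdNormalCDF (x : ℝ) : ℝ :=
  (Real.sqrt (2 * Real.pi))⁻¹ * ∫ t in Set.Iic x, Real.exp (-t ^ 2 / 2)

lemma gauss_integrable : Integrable (fun t : ℝ => Real.exp (-t ^ 2 / 2)) := by
  have h : ∀ t : ℝ, -t ^ 2 / 2 = -(1/2) * t ^ 2 := fun t => by ring
  simp_rw [h]
  exact integrable_exp_neg_mul_sq (by norm_num : (0:ℝ) < 1/2)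

lemma gauss_total : ∫ t : ℝ, Real.exp (-t ^ 2 / 2) = Real.sqrt (2 * Real.pi) := by
  have h : ∀ t : ℝ, -t ^ 2 / 2 = -(1/2) * t ^ 2 := fun t => by ring
  simp_rw [h, integral_gaussian]
  rw [show Real.pi / (1/2) = 2 * Real.pi by ring]

lemma sqrt2pi_pos : 0 < Real.sqrt (2 * Real.pi) := Real.sqrt_pos.2 (by positivity)

lemma stdNormalCDF_nonneg (x : ℝ) : 0 ≤ stdNormalCDF x :=
  mul_nonneg (inv_nonneg.2 (Real.sqrt_nonneg _)) (integral_nonneg fun t => (Real.exp_pos _).le)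

lemma stdNormalCDF_le_one (x : ℝ) : stdNormalCDF x ≤ 1 := by
  have h1 : ∫ t in Set.Iic x, Real.exp (-t ^ 2 / 2) ≤ ∫ t : ℝ, Real.exp (-t ^ 2 / 2) :=
    setIntegral_le_integral gauss_integrable (Filter.Eventually.of_forall fun t => (Real.exp_pos _).le)
  rw [stdNormalCDF]
  calc (Real.sqrt (2 * Real.pi))⁻¹ * ∫ t in Set.Iic x, Real.exp (-t ^ 2 / 2)
      ≤ (Real.sqrt (2 * Real.pi))⁻¹ * Real.sqrt (2 * Real.pi) :=
        mul_le_mul_of_nonneg_left (h1.trans_eq gauss_total) (inv_nonneg.2 (Real.sqrt_nonneg _))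
    _ = 1 := inv_mul_cancel₀ (ne_of_gt sqrt2pi_pos)

lemma stdNormalCDF_sub_le {a b : ℝ} (hab : b ≤ a) :
    stdNormalCDF a - stdNormalCDF b ≤ (a - b) / Real.sqrt (2 * Real.pi) ∧
    0 ≤ stdNormalCDF a - stdNormalCDF b := by
  have hint := gauss_integrable
  have h1 : stdNormalCDF a - stdNormalCDF b
      = (Real.sqrt (2 * Real.pi))⁻¹ * ∫ t in Set.Ioc b a, Real.exp (-t ^ 2 / 2) := by
    rw [stdNormalCDF, stdNormalCDF, ← mul_sub]
    congr 1
    rw [intervalIntegral.integral_Iic_sub_Iic hint.integrableOn hint.integrableOn,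
      intervalIntegral.integral_of_le hab]
  constructor
  · rw [h1, div_eq_inv_mul]
    refine mul_le_mul_of_nonneg_left ?_ (inv_nonneg.2 (Real.sqrt_nonneg _))
    calc ∫ t in Set.Ioc b a, Real.exp (-t ^ 2 / 2) ≤ ∫ _t in Set.Ioc b a, (1:ℝ) := by
          refine setIntegral_mono_on hint.integrableOn (integrableOn_const ?_)
            measurableSet_Ioc fun t _ => ?_
          · rw [Real.volume_Ioc]; exact ENNReal.ofReal_ne_top
          · rw [← Real.exp_zero]
            exact Real.exp_le_exp.2 (by nlinarith [sq_nonneg t])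
      _ = a - b := by
          rw [setIntegral_const, smul_eq_mul, mul_one, measureReal_def, Real.volume_Ioc,
            ENNReal.toReal_ofReal (by linarith)]
  · rw [h1]
    exact mul_nonneg (inv_nonneg.2 (Real.sqrt_nonneg _))
      (integral_nonneg fun t => (Real.exp_pos _).le)

lemma stdNormalCDF_lipschitz (a b : ℝ) :
    |stdNormalCDF a - stdNormalCDF b| ≤ |a - b| / Real.sqrt (2 * Real.pi) := by
  rcases le_total b a with h | h
  · rw [abs_of_nonneg (stdNormalCDF_sub_le h).2, abs_of_nonneg (by linarith : (0:ℝ) ≤ a - b)]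
    exact (stdNormalCDF_sub_le h).1
  · rw [abs_sub_comm, abs_of_nonneg (stdNormalCDF_sub_le h).2, abs_sub_comm a b,
      abs_of_nonneg (by linarith : (0:ℝ) ≤ b - a)]
    exact (stdNormalCDF_sub_le h).1

lemma stdNormalCDF_continuous : Continuous stdNormalCDF := by
  have : LipschitzWith ⟨(Real.sqrt (2 * Real.pi))⁻¹, by positivity⟩ stdNormalCDF := by
    apply LipschitzWith.of_dist_le_mul
    intro x y
    rw [Real.dist_eq, Real.dist_eq]
    calc |stdNormalCDF x - stdNormalCDF y| ≤ |x - y| / Real.sqrt (2 * Real.pi) :=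
          stdNormalCDF_lipschitz x y
      _ = (Real.sqrt (2 * Real.pi))⁻¹ * |x - y| := by rw [div_eq_inv_mul]
  exact this.continuous

-- helper div lemmas
private lemma div_le_div_of_nonneg_right' {a b c : ℝ} (h : a ≤ b) (hc : 0 < c) :
    a / c ≤ b / c := by gcongr

private lemma div_le_div_of_nonneg_left' {a b c : ℝ} (ha : 0 ≤ a) (hb : 0 < b) (hbc : b ≤ c) :
    a / c ≤ a / b := by gcongr


/-- Stability of the smoothed ICE intermediate target densities: if `p` is the
nominal probability density on `ℝ^d`, `q` a proposal density with likelihood-ratio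
control `∫ p²/q ≤ C`, and `π⋆ = Φ(-g/σ) p / Z⋆`, `π̂ = Φ(-ĝ/σ) p / Ẑ` are the
intermediate densities with `Z⋆ ≥ z > 0`, `Ẑ > 0`, then
`∫ |π⋆ - π̂| ≤ (2√C / (z σ √(2π))) (∫ (g - ĝ)² q)^{1/2}`. -/
theorem intermediate_target_L1_stability
    (d : ℕ) (p q g gHat : (Fin d → ℝ) → ℝ)
    (hp : Measurable p) (hq : Measurable q) (hg : Measurable g) (hgHat : Measurable gHat)
    (hp0 : ∀ u, 0 ≤ p u) (hq0 : ∀ u, 0 ≤ q u)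
    (hp1 : ∫ u, p u = 1) (hq1 : ∫ u, q u = 1)
    (hqpos : ∀ᵐ u, 0 < p u → 0 < q u)
    (C : ℝ) (hC : 0 < C)
    (hLRint : Integrable (fun u => (p u) ^ 2 / q u))
    (hLR : ∫ u, (p u) ^ 2 / q u ≤ C)
    (σ z : ℝ) (hσ : 0 < σ) (hz : 0 < z)
    (hZstar : z ≤ ∫ u, stdNormalCDF (-(g u) / σ) * p u)
    (hZhat : 0 < ∫ u, stdNormalCDF (-(gHat u) / σ) * p u)
    (hErrInt : Integrable (fun u => (g u - gHat u) ^ 2 * q u)) :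
    ∫ u, |stdNormalCDF (-(g u) / σ) * p u / (∫ v, stdNormalCDF (-(g v) / σ) * p v)
            - stdNormalCDF (-(gHat u) / σ) * p u / (∫ v, stdNormalCDF (-(gHat v) / σ) * p v)|
      ≤ (2 * Real.sqrt C / (z * σ * Real.sqrt (2 * Real.pi)))
          * Real.sqrt (∫ u, (g u - gHat u) ^ 2 * q u) := by
  have s2π : 0 < Real.sqrt (2 * Real.pi) := sqrt2pi_pos
  obtain ⟨H, hHdef⟩ : ∃ H, H = fun u : Fin d → ℝ => stdNormalCDF (-(g u) / σ) := ⟨_, rfl⟩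
  obtain ⟨Hh, hHhdef⟩ : ∃ Hh, Hh = fun u : Fin d → ℝ => stdNormalCDF (-(gHat u) / σ) := ⟨_, rfl⟩
  have hHu : ∀ u, stdNormalCDF (-(g u) / σ) = H u := fun u => by rw [hHdef]
  have hHhu : ∀ u, stdNormalCDF (-(gHat u) / σ) = Hh u := fun u => by rw [hHhdef]
  simp only [hHu, hHhu] at hZstar hZhat ⊢
  set Z := ∫ v, H v * p v with hZdef
  set Zh := ∫ v, Hh v * p v with hZhdef
  have hZpos : 0 < Z := lt_of_lt_of_le hz hZstar
  have hZhpos : 0 < Zh := hZhat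
  have hHm : Measurable H := by
    rw [hHdef]; exact stdNormalCDF_continuous.measurable.comp (hg.neg.div_const σ)
  have hHhm : Measurable Hh := by
    rw [hHhdef]; exact stdNormalCDF_continuous.measurable.comp (hgHat.neg.div_const σ)
  have hH0 : ∀ u, 0 ≤ H u := fun u => by rw [hHdef]; exact stdNormalCDF_nonneg _
  have hH1 : ∀ u, H u ≤ 1 := fun u => by rw [hHdef]; exact stdNormalCDF_le_one _
  have hHh0 : ∀ u, 0 ≤ Hh u := fun u => by rw [hHhdef]; exact stdNormalCDF_nonneg _
  have hHh1 : ∀ u, Hh u ≤ 1 := fun u => by rw [hHhdef]; exact stdNormalCDF_le_one _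
  have hpInt : Integrable p := by
    by_contra h
    rw [integral_undef h] at hp1; norm_num at hp1
  have hHP : Integrable (fun u => H u * p u) := by
    refine hpInt.mono (hHm.mul hp).aestronglyMeasurable (Filter.Eventually.of_forall fun u => ?_)
    rw [Real.norm_eq_abs, Real.norm_eq_abs, abs_mul, abs_of_nonneg (hH0 u)]
    exact mul_le_of_le_one_left (abs_nonneg _) (hH1 u)
  have hHhP : Integrable (fun u => Hh u * p u) := by
    refine hpInt.mono (hHhm.mul hp).aestronglyMeasurable (Filter.Eventually.of_forall fun u => ?_)
    rw [Real.norm_eq_abs, Real.norm_eq_abs, abs_mul, abs_of_nonneg (hHh0 u)]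
    exact mul_le_of_le_one_left (abs_nonneg _) (hHh1 u)
  have hDInt : Integrable (fun u => |H u - Hh u| * p u) := by
    refine hpInt.mono ((hHm.sub hHhm).abs.mul hp).aestronglyMeasurable
      (Filter.Eventually.of_forall fun u => ?_)
    rw [Real.norm_eq_abs, Real.norm_eq_abs, abs_mul, abs_abs]
    have h1 : |H u - Hh u| ≤ 1 := by
      rw [abs_sub_le_iff]
      constructor <;> linarith [hH0 u, hH1 u, hHh0 u, hHh1 u]
    exact mul_le_of_le_one_left (abs_nonneg _) h1
  set D := ∫ u, |H u - Hh u| * p u with hDdef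
  have hDnonneg : 0 ≤ D :=
    integral_nonneg fun u => mul_nonneg (abs_nonneg _) (hp0 u)

  -- Step A pieces
  have habsZ : |Zh - Z| ≤ D := by
    rw [hZdef, hZhdef, ← integral_sub hHhP hHP]
    calc |∫ u, (Hh u * p u - H u * p u)|
        ≤ ∫ u, |Hh u * p u - H u * p u| := by
          simpa [Real.norm_eq_abs] using
            norm_integral_le_integral_norm (μ := volume) (fun u => Hh u * p u - H u * p u)
      _ = D := by
          rw [hDdef]; congr 1; funext u
          rw [← sub_mul, abs_mul, abs_of_nonneg (hp0 u), abs_sub_comm]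
  have hZZh : Zh * |Z⁻¹ - Zh⁻¹| ≤ D / Z := by
    have h1 : Zh * |Z⁻¹ - Zh⁻¹| = |Zh - Z| / Z := by
      rw [inv_sub_inv hZpos.ne' hZhpos.ne', abs_div, abs_of_pos (mul_pos hZpos hZhpos)]
      field_simp
    rw [h1]
    exact div_le_div_of_nonneg_right' habsZ hZpos
  have hsum : Integrable (fun u => |H u - Hh u| * p u / Z + Hh u * p u * |Z⁻¹ - Zh⁻¹|) :=
    (hDInt.div_const Z).add (hHhP.mul_const _)
  have step1 : ∫ u, |H u * p u / Z - Hh u * p u / Zh| ≤ D / Z + Zh * |Z⁻¹ - Zh⁻¹| := by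
    have hb : ∀ u, |H u * p u / Z - Hh u * p u / Zh|
        ≤ |H u - Hh u| * p u / Z + Hh u * p u * |Z⁻¹ - Zh⁻¹| := by
      intro u
      have hrw : H u * p u / Z - Hh u * p u / Zh
          = (H u - Hh u) * p u / Z + Hh u * p u * (Z⁻¹ - Zh⁻¹) := by
        field_simp
        ring
      rw [hrw]
      refine (abs_add_le _ _).trans (le_of_eq ?_)
      rw [abs_div, abs_of_pos hZpos, abs_mul, abs_of_nonneg (hp0 u), abs_mul,
        abs_of_nonneg (mul_nonneg (hHh0 u) (hp0 u))]
    calc ∫ u, |H u * p u / Z - Hh u * p u / Zh|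
        ≤ ∫ u, (|H u - Hh u| * p u / Z + Hh u * p u * |Z⁻¹ - Zh⁻¹|) :=
          integral_mono (((hHP.div_const Z).sub (hHhP.div_const Zh)).abs) hsum hb
      _ = D / Z + Zh * |Z⁻¹ - Zh⁻¹| := by
          rw [integral_add (hDInt.div_const Z) (hHhP.mul_const _), integral_div,
            integral_mul_const, ← hDdef, ← hZhdef]
  have stepA : ∫ u, |H u * p u / Z - Hh u * p u / Zh| ≤ 2 * D / z := by
    calc ∫ u, |H u * p u / Z - Hh u * p u / Zh| ≤ D / Z + Zh * |Z⁻¹ - Zh⁻¹| := step1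
      _ ≤ D / Z + D / Z := by linarith [hZZh]
      _ = 2 * D / Z := by ring
      _ ≤ 2 * D / z := by
          apply div_le_div_of_nonneg_left' (by linarith) hz hZstar
  -- Step B : D ≤ (σ √(2π))⁻¹ √C √(∫ (g-ĝ)² q)
  have hlip : ∀ u, |H u - Hh u| ≤ |g u - gHat u| / (σ * Real.sqrt (2 * Real.pi)) := by
    intro u
    rw [hHdef, hHhdef]
    calc |stdNormalCDF (-(g u) / σ) - stdNormalCDF (-(gHat u) / σ)|
        ≤ |(-(g u) / σ) - (-(gHat u) / σ)| / Real.sqrt (2 * Real.pi) :=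
          stdNormalCDF_lipschitz _ _
      _ = |g u - gHat u| / (σ * Real.sqrt (2 * Real.pi)) := by
          have h2 : (-(g u) / σ) - (-(gHat u) / σ) = (gHat u - g u) / σ := by ring
          rw [h2, abs_div, abs_of_pos hσ, abs_sub_comm, div_div]
  obtain ⟨f₁, hf1def⟩ : ∃ f₁, f₁ = fun u : Fin d → ℝ => |g u - gHat u| * Real.sqrt (q u) :=
    ⟨_, rfl⟩
  obtain ⟨f₂, hf2def⟩ : ∃ f₂, f₂ = fun u : Fin d → ℝ => p u / Real.sqrt (q u) := ⟨_, rfl⟩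
  have hf1m : Measurable f₁ := by
    rw [hf1def]; exact (hg.sub hgHat).abs.mul (Real.continuous_sqrt.measurable.comp hq)
  have hf2m : Measurable f₂ := by
    rw [hf2def]; exact hp.div (Real.continuous_sqrt.measurable.comp hq)
  have hf1nn : ∀ u, 0 ≤ f₁ u := fun u => by
    rw [hf1def]; exact mul_nonneg (abs_nonneg _) (Real.sqrt_nonneg _)
  have hf2nn : ∀ u, 0 ≤ f₂ u := fun u => by
    rw [hf2def]; exact div_nonneg (hp0 u) (Real.sqrt_nonneg _)
  have hf1sq : (fun u => f₁ u ^ 2) = fun u => (g u - gHat u) ^ 2 * q u := by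
    funext u; rw [hf1def]
    simp only
    rw [mul_pow, sq_abs, Real.sq_sqrt (hq0 u)]
  have hf2sq : (fun u => f₂ u ^ 2) = fun u => p u ^ 2 / q u := by
    funext u; rw [hf2def]
    simp only
    rw [div_pow, Real.sq_sqrt (hq0 u)]
  have hf1L2 : MemLp f₁ 2 volume := by
    rw [memLp_two_iff_integrable_sq hf1m.aestronglyMeasurable, hf1sq]; exact hErrInt
  have hf2L2 : MemLp f₂ 2 volume := by
    rw [memLp_two_iff_integrable_sq hf2m.aestronglyMeasurable, hf2sq]; exact hLRint
  have hf12int : Integrable (fun u => f₁ u * f₂ u) := by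
    have hexp : (1 : ENNReal) / 1 = 1 / 2 + 1 / 2 := by
      rw [ENNReal.div_add_div_same, one_add_one_eq_two,
        ENNReal.div_self two_ne_zero ENNReal.ofNat_ne_top, div_one]
    have h := (haveI : ENNReal.HolderTriple 2 2 1 := ⟨by simpa only [one_div] using hexp.symm⟩; hf1L2.smul hf2L2 : MemLp (f₂ • f₁) 1 volume)
    rw [memLp_one_iff_integrable] at h
    have : (fun u => f₁ u * f₂ u) = f₂ • f₁ := by
      funext u; simp [mul_comm]
    rw [this]
    exact h
  have hptwise : ∀ᵐ u, |H u - Hh u| * p u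
      ≤ (1 / (σ * Real.sqrt (2 * Real.pi))) * (f₁ u * f₂ u) := by
    filter_upwards [hqpos] with u hu
    rcases eq_or_lt_of_le (hq0 u) with hq' | hq'
    · have hpu : p u = 0 := by
        by_contra hpu
        have h3 := hu (lt_of_le_of_ne (hp0 u) (Ne.symm hpu))
        rw [← hq'] at h3
        exact lt_irrefl 0 h3
      have hf2u : f₂ u = 0 := by rw [hf2def]; simp [hpu]
      rw [hpu, hf2u, mul_zero, mul_zero, mul_zero]
    · have hsq : Real.sqrt (q u) ≠ 0 := by
        simp [Real.sqrt_eq_zero', not_le, hq']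
      have hprod : f₁ u * f₂ u = |g u - gHat u| * p u := by
        rw [hf1def, hf2def]
        simp only
        field_simp
      rw [hprod]
      calc |H u - Hh u| * p u
          ≤ (|g u - gHat u| / (σ * Real.sqrt (2 * Real.pi))) * p u :=
            mul_le_mul_of_nonneg_right (hlip u) (hp0 u)
        _ = (1 / (σ * Real.sqrt (2 * Real.pi))) * (|g u - gHat u| * p u) := by ring
  have hDle : D ≤ (1 / (σ * Real.sqrt (2 * Real.pi))) * ∫ u, f₁ u * f₂ u := by
    rw [hDdef]
    calc ∫ u, |H u - Hh u| * p u
        ≤ ∫ u, (1 / (σ * Real.sqrt (2 * Real.pi))) * (f₁ u * f₂ u) :=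
          integral_mono_ae hDInt (hf12int.const_mul _) hptwise
      _ = (1 / (σ * Real.sqrt (2 * Real.pi))) * ∫ u, f₁ u * f₂ u := integral_const_mul _ _
  -- Cauchy–Schwarz
  have hCS : ∫ u, f₁ u * f₂ u
      ≤ Real.sqrt (∫ u, (g u - gHat u) ^ 2 * q u) * Real.sqrt C := by
    have hconj : Real.HolderConjugate 2 2 := ⟨by norm_num, by norm_num, by norm_num⟩
    have h2 : ENNReal.ofReal (2:ℝ) = 2 := by
      rw [ENNReal.ofReal_ofNat]
    have h := integral_mul_le_Lp_mul_Lq_of_nonneg hconj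
      (Filter.Eventually.of_forall hf1nn) (Filter.Eventually.of_forall hf2nn)
      (h2 ▸ hf1L2) (h2 ▸ hf2L2)
    have hrpow : ∀ f : (Fin d → ℝ) → ℝ, (∫ u, f u ^ (2:ℝ)) = ∫ u, f u ^ 2 := by
      intro f
      congr 1; funext u
      rw [show (2:ℝ) = ((2:ℕ):ℝ) by norm_num, Real.rpow_natCast]
    rw [hrpow, hrpow, hf1sq, hf2sq] at h
    have hE0 : 0 ≤ ∫ u, (g u - gHat u) ^ 2 * q u :=
      integral_nonneg fun u => mul_nonneg (sq_nonneg _) (hq0 u)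
    have hQ0 : 0 ≤ ∫ u, p u ^ 2 / q u :=
      integral_nonneg fun u => div_nonneg (sq_nonneg _) (hq0 u)
    calc ∫ u, f₁ u * f₂ u
        ≤ (∫ u, (g u - gHat u) ^ 2 * q u) ^ (1/(2:ℝ)) * (∫ u, p u ^ 2 / q u) ^ (1/(2:ℝ)) := h
      _ = Real.sqrt (∫ u, (g u - gHat u) ^ 2 * q u) * Real.sqrt (∫ u, p u ^ 2 / q u) := by
          rw [Real.sqrt_eq_rpow, Real.sqrt_eq_rpow]
      _ ≤ Real.sqrt (∫ u, (g u - gHat u) ^ 2 * q u) * Real.sqrt C := by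
          apply mul_le_mul_of_nonneg_left (Real.sqrt_le_sqrt hLR) (Real.sqrt_nonneg _)
  -- Assemble
  have hfinal : D ≤ (1 / (σ * Real.sqrt (2 * Real.pi)))
      * (Real.sqrt (∫ u, (g u - gHat u) ^ 2 * q u) * Real.sqrt C) := by
    refine hDle.trans ?_
    apply mul_le_mul_of_nonneg_left hCS (by positivity)
  calc ∫ u, |H u * p u / Z - Hh u * p u / Zh| ≤ 2 * D / z := stepA
    _ ≤ 2 * ((1 / (σ * Real.sqrt (2 * Real.pi)))
          * (Real.sqrt (∫ u, (g u - gHat u) ^ 2 * q u) * Real.sqrt C)) / z := by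
        apply div_le_div_of_nonneg_right' (by linarith) hz |>.trans_eq rfl
    _ = (2 * Real.sqrt C / (z * σ * Real.sqrt (2 * Real.pi)))
          * Real.sqrt (∫ u, (g u - gHat u) ^ 2 * q u) := by
        field_simp
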